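/- Let n ≥ 1 be a natural number. For each integer k ≥ 1 set u_k = 2^{−(k+1)}·√(6n/(1 − 4^{−k})) and A(n,k) = erf(u_k), where erf(u) = (2/√π)·∫_0^u e^{−t²} dt. Then Σ_{k=1}^{∞} A(n,k) ≤ (1/2)·log₂(6n/π + 1) + √(3/(1 + π/(6n))). -/

import Mathlib

open Real MeasureTheory

lemma gauss_nonneg (x : ℝ) (hx : 0 ≤ x) : 0 ≤ ∫ t in (0:ℝ)..x, Real.exp (-t ^ 2) :=
  intervalIntegral.integral_nonneg hx fun t _ => (Real.exp_pos _).le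

lemma gauss_le (x : ℝ) : ∫ t in (0:ℝ)..x, Real.exp (-t ^ 2) ≤ Real.sqrt π / 2 := by
  have hint : IntegrableOn (fun t : ℝ => Real.exp (-t ^ 2)) (Set.Ioi 0) := by
    have := (integrable_exp_neg_mul_sq (by norm_num : (0:ℝ) < 1)).integrableOn (s := Set.Ioi 0)
    simpa using this
  rcases le_or_gt x 0 with hx | hx
  · calc ∫ t in (0:ℝ)..x, Real.exp (-t ^ 2) ≤ 0 := by
          rw [intervalIntegral.integral_of_ge hx]
          simp only [neg_nonpos]
          exact integral_nonneg fun t => (Real.exp_pos _).le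
        _ ≤ _ := by positivity
  · rw [intervalIntegral.integral_of_le hx.le]
    calc ∫ t in Set.Ioc (0:ℝ) x, Real.exp (-t ^ 2)
        ≤ ∫ t in Set.Ioi (0:ℝ), Real.exp (-t ^ 2) := by
          apply setIntegral_mono_set hint
          · exact Filter.Eventually.of_forall fun t => (Real.exp_pos _).le
          · exact HasSubset.Subset.eventuallyLE Set.Ioc_subset_Ioi_self
      _ = Real.sqrt π / 2 := by
          have := integral_gaussian_Ioi 1
          simpa using this

lemma gauss_le_self (x : ℝ) (hx : 0 ≤ x) : ∫ t in (0:ℝ)..x, Real.exp (-t ^ 2) ≤ x := by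
  calc ∫ t in (0:ℝ)..x, Real.exp (-t ^ 2) ≤ ∫ t in (0:ℝ)..x, (1:ℝ) := by
        apply intervalIntegral.integral_mono_on hx
        · exact (Continuous.intervalIntegrable (by continuity) _ _)
        · exact intervalIntegrable_const
        · intro t _
          exact Real.exp_le_one_iff.mpr (by nlinarith [sq_nonneg t])
    _ = x := by simp

lemma two_rpow_le_one_add (t : ℝ) (h0 : 0 ≤ t) (h1 : t ≤ 1) :
    Real.exp (t * Real.log 2) ≤ 1 + t := by
  have := convexOn_exp.2 (Set.mem_univ (0:ℝ)) (Set.mem_univ (Real.log 2))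
    (by linarith : (0:ℝ) ≤ 1 - t) h0 (by ring)
  simp only [smul_eq_mul, mul_zero, zero_add, Real.exp_zero, Real.exp_log two_pos] at this
  linarith

lemma le_one_add_logb (x : ℝ) (h1 : 1 ≤ x) (h2 : x ≤ 2) : x ≤ 1 + Real.logb 2 x := by
  have hl2 : 0 < Real.log 2 := Real.log_pos (by norm_num)
  have key : (x - 1) * Real.log 2 ≤ Real.log x := by
    have h := two_rpow_le_one_add (x - 1) (by linarith) (by linarith)
    have heq : (x - 1) * Real.log 2 = Real.log (Real.exp ((x - 1) * Real.log 2)) := by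
      rw [Real.log_exp]
    rw [heq]
    apply Real.log_le_log (Real.exp_pos _)
    linarith
  rw [Real.logb]
  rw [div_eq_mul_inv, ← sub_le_iff_le_add']
  have : x - 1 ≤ Real.log x * (Real.log 2)⁻¹ := by
    rw [← div_eq_mul_inv, le_div_iff₀ hl2]
    linarith
  linarith

set_option maxHeartbeats 1600000 in
theorem stmt_10 (n : ℕ) (hn : 1 ≤ n)
    (erf : ℝ → ℝ)
    (herf : ∀ x : ℝ, erf x = (2 / Real.sqrt π) * ∫ t in (0 : ℝ)..x, Real.exp (-t ^ 2))
    (u : ℕ → ℝ)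
    (hu : ∀ k, u k = (2 : ℝ) ^ (-((k : ℤ) + 1))
      * Real.sqrt (6 * (n : ℝ) / (1 - (4 : ℝ) ^ (-(k : ℤ))))) :
    Summable (fun k : ℕ => erf (u (k + 1))) ∧
    ∑' k : ℕ, erf (u (k + 1))
      ≤ (1 / 2) * Real.logb 2 (6 * (n : ℝ) / π + 1)
        + Real.sqrt (3 / (1 + π / (6 * (n : ℝ)))) := by
  have hπ : 0 < π := Real.pi_pos
  have hsπ : 0 < Real.sqrt π := Real.sqrt_pos.mpr hπ
  set N := (n : ℝ) with hNdef
  have hN1 : (1:ℝ) ≤ N := by rw [hNdef]; exact_mod_cast hn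
  have hNpos : (0:ℝ) < N := by linarith
  clear_value N
  -- rewrite u in terms of natural powers
  have hu' : ∀ j : ℕ, u (j+1) = (1/2:ℝ)^(j+2) * Real.sqrt (6*N/(1 - ((4:ℝ)^(j+1))⁻¹)) := by
    intro j
    have e1 : (2:ℝ) ^ (-(((j+1:ℕ):ℤ) + 1)) = (1/2:ℝ)^(j+2) := by
      have h1 : -(((j+1:ℕ):ℤ)+1) = -(((j+2:ℕ):ℤ)) := by push_cast; ring
      rw [h1, zpow_neg, zpow_natCast, one_div, inv_pow]
    have e2 : (4:ℝ) ^ (-((j+1:ℕ):ℤ)) = ((4:ℝ)^(j+1))⁻¹ := by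
      rw [zpow_neg, zpow_natCast]
    rw [hu, e1, e2]
  have hden : ∀ j : ℕ, (3/4:ℝ) ≤ 1 - ((4:ℝ)^(j+1))⁻¹ := by
    intro j
    have h4 : (4:ℝ) ≤ 4^(j+1) := by
      calc (4:ℝ) = 4^1 := (pow_one 4).symm
        _ ≤ 4^(j+1) := by
          apply pow_le_pow_right₀ (by norm_num)
          omega
    have : ((4:ℝ)^(j+1))⁻¹ ≤ 1/4 := by
      rw [inv_le_comm₀ (by positivity) (by norm_num)]
      linarith
    linarith
  have hdenpos : ∀ j : ℕ, (0:ℝ) < 1 - ((4:ℝ)^(j+1))⁻¹ := fun j => lt_of_lt_of_le (by norm_num) (hden j)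
  have hupos : ∀ j : ℕ, 0 < u (j+1) := by
    intro j
    rw [hu' j]
    have : 0 < 6*N/(1 - ((4:ℝ)^(j+1))⁻¹) := by
      apply div_pos (by linarith) (hdenpos j)
    positivity
  have hub : ∀ (j : ℕ) (E : ℝ), 0 < E → E ≤ 1 - ((4:ℝ)^(j+1))⁻¹ →
      u (j+1) ≤ (1/2:ℝ)^(j+2) * Real.sqrt (6*N/E) := by
    intro j E hE hE2
    rw [hu' j]
    apply mul_le_mul_of_nonneg_left _ (by positivity)
    apply Real.sqrt_le_sqrt
    apply div_le_div_of_nonneg_left (by linarith) hE hE2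
  -- erf bounds
  have herf_le_one : ∀ x : ℝ, erf x ≤ 1 := by
    intro x
    rw [herf]
    calc (2 / Real.sqrt π) * ∫ t in (0:ℝ)..x, Real.exp (-t ^ 2)
        ≤ (2 / Real.sqrt π) * (Real.sqrt π / 2) :=
          mul_le_mul_of_nonneg_left (gauss_le x) (by positivity)
      _ = 1 := by field_simp
  have herf_nonneg : ∀ x : ℝ, 0 ≤ x → 0 ≤ erf x := by
    intro x hx
    rw [herf]
    exact mul_nonneg (by positivity) (gauss_nonneg x hx)
  have herf_lin : ∀ x : ℝ, 0 ≤ x → erf x ≤ (2 / Real.sqrt π) * x := by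
    intro x hx
    rw [herf]
    exact mul_le_mul_of_nonneg_left (gauss_le_self x hx) (by positivity)
  -- summability
  have hgeo : Summable (fun k : ℕ => ((2 / Real.sqrt π) * Real.sqrt (8*N)) * (1/2:ℝ)^k) :=
    (summable_geometric_of_lt_one (by norm_num) (by norm_num)).mul_left _
  have hmaj : ∀ k : ℕ, erf (u (k+1)) ≤ ((2 / Real.sqrt π) * Real.sqrt (8*N)) * (1/2:ℝ)^k := by
    intro k
    have h1 : u (k+1) ≤ (1/2:ℝ)^(k+2) * Real.sqrt (6*N/(3/4)) :=
      hub k (3/4) (by norm_num) (hden k)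
    have h2 : (6:ℝ)*N/(3/4) = 8*N := by ring
    calc erf (u (k+1)) ≤ (2 / Real.sqrt π) * u (k+1) := herf_lin _ (hupos k).le
      _ ≤ (2 / Real.sqrt π) * ((1/2:ℝ)^(k+2) * Real.sqrt (8*N)) := by
          rw [← h2]
          exact mul_le_mul_of_nonneg_left h1 (by positivity)
      _ = ((2 / Real.sqrt π) * Real.sqrt (8*N)) * (1/2:ℝ)^(k+2) := by ring
      _ ≤ ((2 / Real.sqrt π) * Real.sqrt (8*N)) * (1/2:ℝ)^k := by
          have : (1/2:ℝ)^(k+2) ≤ (1/2:ℝ)^k :=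
            pow_le_pow_of_le_one (by norm_num) (by norm_num) (by omega)
          exact mul_le_mul_of_nonneg_left this (by positivity)
  have hsum : Summable (fun k : ℕ => erf (u (k + 1))) :=
    Summable.of_nonneg_of_le (fun k => herf_nonneg _ (hupos k).le) hmaj hgeo
  refine ⟨hsum, ?_⟩
  -- setup constants
  set Q : ℝ := 6*N/π + 1 with hQdef
  have hQpos : 0 < Q := by positivity
  have hQ1 : 1 < Q := by
    have : 0 < 6*N/π := by positivity
    simp only [hQdef]; linarith
  set K₀ : ℝ := (1/2) * Real.logb 2 Q with hK₀def
  have hK₀pos : 0 < K₀ := by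
    have := Real.logb_pos (by norm_num : (1:ℝ) < 2) hQ1
    simp only [hK₀def]; linarith
  set m : ℕ := Nat.floor K₀ with hmdef
  have hmle : (m:ℝ) ≤ K₀ := Nat.floor_le hK₀pos.le
  have hltm : K₀ < m + 1 := Nat.lt_floor_add_one K₀
  clear_value m
  set P : ℝ := (4:ℝ)^m with hPdef
  have hPpos : 0 < P := by positivity
  have hP1 : 1 ≤ P := one_le_pow₀ (by norm_num)
  -- P ≤ Q < 4P
  have hr1 : ((2:ℝ)) ^ (((2*m : ℕ)):ℝ) = P := by
    rw [Real.rpow_natCast, pow_mul]; norm_num; exact hPdef.symm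
  have hr2 : ((2:ℝ)) ^ (((2*(m+1) : ℕ)):ℝ) = 4*P := by
    rw [Real.rpow_natCast, pow_mul]
    norm_num [pow_succ, hPdef]; ring
  have hPQ : P ≤ Q := by
    rw [← hr1]
    apply (Real.le_logb_iff_rpow_le (by norm_num) hQpos).mp
    push_cast
    simp only [hK₀def] at hmle
    linarith
  have hQP : Q < 4*P := by
    rw [← hr2]
    apply (Real.logb_lt_iff_lt_rpow (by norm_num) hQpos).mp
    push_cast
    simp only [hK₀def] at hltm
    linarith
  clear_value K₀ P
  -- tail constants
  set D : ℝ := 1 - ((4:ℝ)^(m+1))⁻¹ with hDdef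
  have hDpos : 0 < D := hdenpos m
  have h4P : (4:ℝ)^(m+1) = 4*P := by rw [pow_succ, hPdef]; ring
  set C : ℝ := Real.sqrt (6*N/D) with hCdef
  have hCpos : 0 < C := Real.sqrt_pos.mpr (div_pos (by linarith) hDpos)
  set B : ℝ := (2 / Real.sqrt π) * ((1/2:ℝ)^(m+1) * C) with hBdef
  have hBpos : 0 < B := by positivity
  clear_value B C D
  -- split the sum
  have hsplit : ∑' k : ℕ, erf (u (k+1))
      = (∑ i ∈ Finset.range m, erf (u (i+1))) + ∑' k : ℕ, erf (u (k + m + 1)) := by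
    have := (Summable.sum_add_tsum_nat_add m hsum).symm
    convert this using 2
  have hhead : ∑ i ∈ Finset.range m, erf (u (i+1)) ≤ m := by
    calc ∑ i ∈ Finset.range m, erf (u (i+1)) ≤ ∑ i ∈ Finset.range m, (1:ℝ) :=
          Finset.sum_le_sum (fun i _ => herf_le_one _)
      _ = m := by simp
  -- tail bound
  have htail_term : ∀ k : ℕ, erf (u (k + m + 1)) ≤ (B/2) * (1/2:ℝ)^k := by
    intro k
    have hDle : D ≤ 1 - ((4:ℝ)^(k+m+1))⁻¹ := by
      have : (4:ℝ)^(m+1) ≤ (4:ℝ)^(k+m+1) := by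
        apply pow_le_pow_right₀ (by norm_num); omega
      have h1 : ((4:ℝ)^(k+m+1))⁻¹ ≤ ((4:ℝ)^(m+1))⁻¹ := by
        apply inv_anti₀ (by positivity) this
      simp only [hDdef]; linarith
    have h1 : u (k+m+1) ≤ (1/2:ℝ)^(k+m+2) * C := by
      rw [hCdef]; exact hub (k+m) D hDpos hDle
    have hpow : (1/2:ℝ)^(k+m+2) = (1/2:ℝ)^(m+1) * ((1/2:ℝ)^k * (1/2)) := by
      rw [← pow_succ, ← pow_add]
      congr 1
      omega
    calc erf (u (k+m+1)) ≤ (2 / Real.sqrt π) * u (k+m+1) := herf_lin _ (hupos _).le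
      _ ≤ (2 / Real.sqrt π) * ((1/2:ℝ)^(k+m+2) * C) :=
          mul_le_mul_of_nonneg_left h1 (by positivity)
      _ = (B/2) * (1/2:ℝ)^k := by rw [hpow, hBdef]; ring
  have htailsummable : Summable (fun k : ℕ => erf (u (k + m + 1))) := by
    have h := (summable_nat_add_iff (f := fun k : ℕ => erf (u (k+1))) m).2 hsum
    simpa using h
  have htailsum : ∑' k : ℕ, erf (u (k + m + 1)) ≤ B := by
    have hs2 : Summable (fun k : ℕ => (B/2) * (1/2:ℝ)^k) :=
      (summable_geometric_of_lt_one (by norm_num) (by norm_num)).mul_left _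
    calc ∑' k : ℕ, erf (u (k + m + 1)) ≤ ∑' k : ℕ, (B/2) * (1/2:ℝ)^k :=
          Summable.tsum_le_tsum htail_term htailsummable hs2
      _ = (B/2) * (1 - 1/2:ℝ)⁻¹ := by
          rw [tsum_mul_left, tsum_geometric_of_lt_one (by norm_num) (by norm_num)]
      _ = B := by norm_num
  -- endgame : m + B ≤ K₀ + T
  set x : ℝ := Real.sqrt Q / 2^m with hxdef
  clear_value x
  have h2mpos : (0:ℝ) < 2^m := by positivity
  have hsqP : Real.sqrt P = 2^m := by
    have hPsq : P = ((2:ℝ)^m)^2 := by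
      rw [hPdef, show (4:ℝ) = 2^2 by norm_num, ← pow_mul, ← pow_mul, mul_comm]
    rw [hPsq, Real.sqrt_sq (by positivity)]
  have hBx : B ≤ x := by
    have hxQ : x = Real.sqrt (Q/P) := by
      rw [Real.sqrt_div hQpos.le, hsqP]; exact hxdef
    rw [hxQ, Real.le_sqrt hBpos.le (div_nonneg hQpos.le hPpos.le)]
    have h4P1pos : (0:ℝ) < 4*P - 1 := by linarith
    have hB2 : B^2 = 24*N/(π*(4*P - 1)) := by
      have hC2 : C^2 = 6*N/D := by
        rw [hCdef]; exact Real.sq_sqrt (div_pos (by linarith) hDpos).le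
      have hsπ2 : (Real.sqrt π)^2 = π := Real.sq_sqrt hπ.le
      have hhalf : ((1/2:ℝ)^(m+1))^2 = ((4:ℝ)^(m+1))⁻¹ := by
        rw [← pow_mul, mul_comm (m+1) 2, pow_mul]
        norm_num [← inv_pow]
      have hDval : D = (4*P - 1)/(4*P) := by
        rw [hDdef, h4P]
        field_simp
      have hC2' : C^2 = 6*N*(4*P)/(4*P - 1) := by
        rw [hC2, hDval]
        have hP4ne : (4:ℝ)*P ≠ 0 := by positivity
        field_simp
      rw [hBdef, mul_pow, mul_pow, hC2', hhalf, div_pow, hsπ2, h4P]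
      field_simp
      ring
    rw [hB2]
    rw [div_le_div_iff₀ (mul_pos hπ h4P1pos) hPpos]
    -- 24 N P ≤ Q (π (4P - 1))
    have hQπ : Q * π = 6*N + π := by rw [hQdef]; field_simp
    have h6 : 6*N + π < 4*P*π := by
      rw [← hQπ]
      exact mul_lt_mul_of_pos_right hQP hπ
    have hexp : Q*(π*(4*P-1)) = (6*N+π)*(4*P-1) := by
      rw [← hQπ]; ring
    rw [hexp]
    nlinarith [h6]
  have hx1 : 1 ≤ x := by
    rw [hxdef, le_div_iff₀ h2mpos, one_mul, ← hsqP]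
    exact Real.sqrt_le_sqrt hPQ
  have hx2 : x ≤ 2 := by
    rw [hxdef, div_le_iff₀ h2mpos]
    calc Real.sqrt Q ≤ Real.sqrt (4*P) := Real.sqrt_le_sqrt hQP.le
      _ = 2 * 2^m := by
        rw [Real.sqrt_mul (by norm_num) P, hsqP,
          show (4:ℝ) = 2^2 by norm_num, Real.sqrt_sq (by norm_num : (0:ℝ) ≤ 2)]
  have hlogx : Real.logb 2 x = K₀ - m := by
    have hl2 : Real.log 2 ≠ 0 := ne_of_gt (Real.log_pos (by norm_num))
    have hsqQne : Real.sqrt Q ≠ 0 := ne_of_gt (Real.sqrt_pos.mpr hQpos)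
    have h2mne : ((2:ℝ)^m) ≠ 0 := ne_of_gt h2mpos
    rw [hxdef, Real.logb, Real.log_div hsqQne h2mne, Real.log_sqrt hQpos.le, Real.log_pow,
      hK₀def, Real.logb]
    field_simp
  have hT1 : 1 ≤ Real.sqrt (3 / (1 + π / (6*N))) := by
    rw [Real.one_le_sqrt]
    have hd : 0 < 1 + π/(6*N) := by positivity
    rw [le_div_iff₀ hd, one_mul]
    have : π / (6*N) ≤ 2 := by
      rw [div_le_iff₀ (by positivity)]
      nlinarith [Real.pi_le_four, hN1]
    linarith
  -- final chain
  have hfin : (m:ℝ) + B ≤ K₀ + Real.sqrt (3 / (1 + π / (6*N))) := by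
    have := le_one_add_logb x hx1 hx2
    rw [hlogx] at this
    linarith [hBx]
  calc ∑' k : ℕ, erf (u (k+1))
      = (∑ i ∈ Finset.range m, erf (u (i+1))) + ∑' k : ℕ, erf (u (k + m + 1)) := hsplit
    _ ≤ (m:ℝ) + B := add_le_add hhead htailsum
    _ ≤ K₀ + Real.sqrt (3 / (1 + π / (6*N))) := hfin
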